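/- Let κ be an uncountable regular cardinal with κ^{<κ} = κ. If all sets in a pointclass Γ closed under continuous preimages are κ-Silver-measurable, then all sets in Γ are κ-Sacks-measurable. More precisely: given a κ-Sacks tree T, the order-preserving bijection φ of 2^{<κ} with the splitting nodes of T induces a homeomorphism φ* : 2^κ → [T]; if A ∈ Γ and S is a κ-Silver tree with [S] ⊆ (φ*)^{-1}(A) (resp. disjoint from it), then the tree generated by φ''S is a κ-Sacks subtree of T whose branch set is contained in A (resp. disjoint from A). -/

import Mathlib

open Cardinal Set

structure PreSeq2 where
  len : Ordinal
  val : Ordinal → Bool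

def PreSeq2.Canonical (s : PreSeq2) : Prop := ∀ i, s.len ≤ i → s.val i = false

def PreSeq2.Ext (s t : PreSeq2) : Prop := s.len ≤ t.len ∧ ∀ i < s.len, s.val i = t.val i

noncomputable def restrictFn2 (x : Ordinal → Bool) (a : Ordinal) : PreSeq2 :=
  ⟨a, fun i => if i < a then x i else false⟩

noncomputable def PreSeq2.snoc (s : PreSeq2) (b : Bool) : PreSeq2 :=
  ⟨s.len + 1, fun i => if i < s.len then s.val i else if i = s.len then b else false⟩

def IsClubIn (c : Set Ordinal) (k : Ordinal) : Prop :=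
  c ⊆ Set.Iio k ∧
  (∀ l, l < k → Order.IsSuccLimit l → (∀ a < l, ∃ b ∈ c, a ≤ b ∧ b < l) → l ∈ c) ∧
  (∀ a < k, ∃ b ∈ c, a ≤ b)

def Splitting (T : Set PreSeq2) (t : PreSeq2) : Prop :=
  PreSeq2.snoc t false ∈ T ∧ PreSeq2.snoc t true ∈ T

def IsSacks (κ : Cardinal) (T : Set PreSeq2) : Prop :=
  T.Nonempty ∧
  (∀ s ∈ T, s.len < κ.ord ∧ s.Canonical) ∧
  (∀ s ∈ T, ∀ a ≤ s.len, restrictFn2 s.val a ∈ T) ∧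
  (∀ s ∈ T, ∃ t ∈ T, PreSeq2.Ext s t ∧ s.len < t.len) ∧
  (∀ x : Ordinal → Bool, ∀ l, l < κ.ord → Order.IsSuccLimit l →
    (∀ a < l, restrictFn2 x a ∈ T) → restrictFn2 x l ∈ T) ∧
  (∀ s ∈ T, ∃ t ∈ T, PreSeq2.Ext s t ∧ Splitting T t) ∧
  (∀ x : Ordinal → Bool, ∀ l, l < κ.ord → Order.IsSuccLimit l →
    (∀ a < l, ∃ b, a ≤ b ∧ b < l ∧ Splitting T (restrictFn2 x b)) →
    Splitting T (restrictFn2 x l))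

def Branches2 (κ : Cardinal) (T : Set PreSeq2) : Set (Ordinal → Bool) :=
  { x | ∀ a < κ.ord, restrictFn2 x a ∈ T }


def boundedTop2 (κ : Cardinal) : TopologicalSpace (Ordinal → Bool) :=
  TopologicalSpace.generateFrom
    { U | ∃ a < κ.ord, ∃ s : Ordinal → Bool, U = { x | ∀ i < a, x i = s i } }

/-- Uniform tree: splitting depends only on the level. -/
def Uniform (T : Set PreSeq2) : Prop :=
  ∀ s ∈ T, ∀ t ∈ T, s.len = t.len → ∀ b, (PreSeq2.snoc s b ∈ T ↔ PreSeq2.snoc t b ∈ T)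

/-- κ-Silver tree: a uniform κ-Sacks tree. -/
def IsSilver (κ : Cardinal) (T : Set PreSeq2) : Prop :=
  IsSacks κ T ∧ Uniform T

/-- κ-Sacks measurability (strong sense). -/
def SacksMeasurable (κ : Cardinal) (A : Set (Ordinal → Bool)) : Prop :=
  ∀ T, IsSacks κ T → ∃ S, IsSacks κ S ∧ S ⊆ T ∧
    (Branches2 κ S ⊆ A ∨ Branches2 κ S ∩ A = ∅)

/-- κ-Silver measurability (strong sense). -/
def SilverMeasurable (κ : Cardinal) (A : Set (Ordinal → Bool)) : Prop :=
  ∀ T, IsSilver κ T → ∃ S, IsSilver κ S ∧ S ⊆ T ∧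
    (Branches2 κ S ⊆ A ∨ Branches2 κ S ∩ A = ∅)

namespace SilverSacks

open Ordinal Set

instance : Inhabited PreSeq2 := ⟨⟨0, fun _ => false⟩⟩

lemma PreSeq2.ext2 {s t : PreSeq2} (h1 : s.len = t.len) (h2 : ∀ i, s.val i = t.val i) : s = t := by
  cases s; cases t
  simp only [PreSeq2.mk.injEq] at *
  exact ⟨h1, funext h2⟩

lemma ext_refl (s : PreSeq2) : s.Ext s := ⟨le_rfl, fun _ _ => rfl⟩

lemma ext_trans {s t u : PreSeq2} (h1 : s.Ext t) (h2 : t.Ext u) : s.Ext u :=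
  ⟨h1.1.trans h2.1, fun i hi => (h1.2 i hi).trans (h2.2 i (lt_of_lt_of_le hi h1.1))⟩

lemma olt_add_one (a : Ordinal) : a < a + 1 := by
  rw [Ordinal.add_one_eq_succ]; exact Order.lt_succ a

lemma oadd_one_le_iff {a b : Ordinal} : a + 1 ≤ b ↔ a < b := by
  rw [Ordinal.add_one_eq_succ]; exact Order.succ_le_iff

lemma olt_add_one_iff {a b : Ordinal} : a < b + 1 ↔ a ≤ b := by
  rw [Ordinal.add_one_eq_succ]; exact Order.lt_succ_iff

lemma oadd_one_lt {l a : Ordinal} (hl : Order.IsSuccLimit l) (h : a < l) : a + 1 < l := by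
  rw [Ordinal.add_one_eq_succ]; exact hl.succ_lt h

lemma oadd_one_inj {a b : Ordinal} (h : a + 1 = b + 1) : a = b := by
  apply le_antisymm
  · exact olt_add_one_iff.1 (h ▸ olt_add_one a)
  · exact olt_add_one_iff.1 (h ▸ olt_add_one b)

@[simp] lemma restrict_len (x : Ordinal → Bool) (a : Ordinal) : (restrictFn2 x a).len = a := rfl

lemma restrict_val_lt {x : Ordinal → Bool} {a i : Ordinal} (h : i < a) :
    (restrictFn2 x a).val i = x i := if_pos h

lemma restrict_canonical (x : Ordinal → Bool) (a : Ordinal) : (restrictFn2 x a).Canonical :=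
  fun i hi => if_neg (not_lt.2 hi)

lemma restrict_eq_restrict {x y : Ordinal → Bool} {a : Ordinal} (h : ∀ i < a, x i = y i) :
    restrictFn2 x a = restrictFn2 y a := by
  refine PreSeq2.ext2 rfl fun i => ?_
  by_cases hi : i < a
  · rw [restrict_val_lt hi, restrict_val_lt hi]; exact h i hi
  · show (if i < a then x i else false) = (if i < a then y i else false)
    rw [if_neg hi, if_neg hi]

lemma ext_restrict {x : Ordinal → Bool} {a b : Ordinal} (h : a ≤ b) :
    (restrictFn2 x a).Ext (restrictFn2 x b) := by
  refine ⟨h, fun i hi => ?_⟩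
  rw [restrict_len] at hi
  rw [restrict_val_lt hi, restrict_val_lt (lt_of_lt_of_le hi h)]

lemma restrict_restrict {x : Ordinal → Bool} {a b : Ordinal} (h : a ≤ b) :
    restrictFn2 (restrictFn2 x b).val a = restrictFn2 x a :=
  restrict_eq_restrict fun i hi => restrict_val_lt (lt_of_lt_of_le hi h)

lemma canonical_restrict_self {s : PreSeq2} (hs : s.Canonical) : restrictFn2 s.val s.len = s := by
  refine PreSeq2.ext2 rfl fun i => ?_
  by_cases hi : i < s.len
  · exact restrict_val_lt hi
  · show (if i < s.len then s.val i else false) = s.val i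
    rw [if_neg hi, hs i (not_lt.1 hi)]

lemma ext_restrict_eq {s t : PreSeq2} (h : s.Ext t) (hs : s.Canonical) :
    restrictFn2 t.val s.len = s := by
  rw [← canonical_restrict_self hs]
  exact restrict_eq_restrict fun i hi => (h.2 i hi).symm

lemma snoc_len (s : PreSeq2) (b : Bool) : (s.snoc b).len = s.len + 1 := rfl

lemma snoc_val_lt {s : PreSeq2} {b : Bool} {i : Ordinal} (h : i < s.len) :
    (s.snoc b).val i = s.val i := if_pos h

lemma snoc_val_len (s : PreSeq2) (b : Bool) : (s.snoc b).val s.len = b := by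
  show (if s.len < s.len then _ else if s.len = s.len then b else false) = b
  rw [if_neg (lt_irrefl _), if_pos rfl]

lemma ext_snoc (s : PreSeq2) (b : Bool) : s.Ext (s.snoc b) :=
  ⟨le_of_lt (by rw [snoc_len]; exact olt_add_one _), fun i hi => (snoc_val_lt hi).symm⟩

lemma snoc_canonical (s : PreSeq2) (b : Bool) : (s.snoc b).Canonical := by
  intro i hi
  rw [snoc_len] at hi
  have h1 : ¬ i < s.len := not_lt.2 (le_of_lt (lt_of_lt_of_le (olt_add_one _) hi))
  have h2 : i ≠ s.len := fun h => absurd (h ▸ hi) (not_le.2 (olt_add_one _))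
  show (if i < s.len then s.val i else if i = s.len then b else false) = false
  rw [if_neg h1, if_neg h2]

lemma snoc_eq_restrict {s : PreSeq2} {b : Bool} {y : Ordinal → Bool}
    (h1 : ∀ i < s.len, y i = s.val i) (h2 : y s.len = b) :
    s.snoc b = restrictFn2 y (s.len + 1) := by
  refine PreSeq2.ext2 rfl fun i => ?_
  show (if i < s.len then s.val i else if i = s.len then b else false)
      = (if i < s.len + 1 then y i else false)
  rcases lt_trichotomy i s.len with h | h | h
  · rw [if_pos h, if_pos (h.trans (olt_add_one _)), h1 i h]
  · subst h; rw [if_neg (lt_irrefl _), if_pos rfl, if_pos (olt_add_one _), h2]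
  · rw [if_neg (not_lt.2 h.le), if_neg (ne_of_gt h), if_neg (not_lt.2 (oadd_one_le_iff.2 h))]

end SilverSacks
namespace SilverSacks

open Ordinal Set

universe u

/-- The union/extension construction at limit stages, common to several recursions. -/
lemma limit_union {κ : Cardinal.{0}} {W : Set PreSeq2} (hreg : κ.IsRegular) (hW : IsSacks κ W)
    {o : Ordinal} (ho : o < κ.ord) (hlo : Order.IsSuccLimit o) (g : Ordinal → PreSeq2)
    (hmem' : ∀ c < o, g c ∈ W)
    (hmono : ∀ c c', c < c' → c' < o → (g c).Ext (g c') ∧ (g c).len < (g c').len)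
    (hlow : ∀ c < o, c ≤ (g c).len) :
    ∃ u, u ∈ W ∧ (∀ c < o, (g c).Ext u ∧ (g c).len < u.len) ∧ o ≤ u.len ∧
      (∀ a < u.len, ∃ c, c < o ∧ a < (g c).len) ∧
      ((∀ c < o, Splitting W (g c)) → Splitting W u) := by
  classical
  obtain ⟨hne, hmem, hres, hext, hlim, hsplit, hsplim⟩ := hW
  have hsucco : ∀ c < o, c + 1 < o := fun c hc => oadd_one_lt hlo hc
  set e : o.ToType → Set.Iio o := fun i => (Ordinal.ToType.mk).symm i with he
  haveI : Nonempty o.ToType := ⟨Ordinal.ToType.mk ⟨0, hlo.pos⟩⟩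
  set F : o.ToType → Ordinal := fun i => (g (e i).1).len with hF
  have hbdd : BddAbove (Set.range F) := by
    refine ⟨κ.ord, ?_⟩
    rintro _ ⟨i, rfl⟩
    exact ((hmem _ (hmem' _ (e i).2)).1).le
  set L := ⨆ i, F i with hL
  have hfle : ∀ c (hc : c < o), (g c).len ≤ L := by
    intro c hc
    have h1 : (g c).len = F (Ordinal.ToType.mk ⟨c, hc⟩) := by
      simp only [hF, he, OrderIso.symm_apply_apply]
    rw [h1]; exact le_ciSup hbdd _
  have hexists : ∀ a, a < L → ∃ c, c < o ∧ a < (g c).len := by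
    intro a ha
    obtain ⟨i, hi⟩ := (lt_ciSup_iff hbdd).1 ha
    exact ⟨(e i).1, (e i).2, hi⟩
  have hstrict : ∀ c, c < o → (g c).len < L := fun c hc =>
    lt_of_lt_of_le (hmono c (c + 1) (olt_add_one c) (hsucco c hc)).2 (hfle (c + 1) (hsucco c hc))
  have hoL : o ≤ L := by
    by_contra h
    exact absurd (lt_of_le_of_lt (hlow L (lt_of_not_ge h)) (hstrict L (lt_of_not_ge h)))
      (lt_irrefl L)
  have hLord : L < κ.ord := by
    refine Ordinal.iSup_lt_ord ?_ fun i => (hmem _ (hmem' _ (e i).2)).1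
    rw [Cardinal.mk_toType, hreg.cof_eq]
    exact Cardinal.lt_ord.1 ho
  have hLlim : Order.IsSuccLimit L := by
    rw [Ordinal.isSuccLimit_iff, Order.isSuccPrelimit_iff_succ_lt]; constructor
    · exact (lt_of_le_of_lt (zero_le) (hstrict 0 hlo.pos)).ne'
    · intro a ha
      obtain ⟨c, hc, hca⟩ := hexists a ha
      rw [← Ordinal.add_one_eq_succ]
      exact lt_of_le_of_lt (oadd_one_le_iff.2 hca) (hstrict c hc)
  set uval : Ordinal → Bool := fun i =>
    if h : ∃ c, c < o ∧ i < (g c).len then (g (Classical.choose h)).val i else false with huval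
  have huv : ∀ c i, c < o → i < (g c).len → uval i = (g c).val i := by
    intro c i hc hi
    have hex : ∃ c', c' < o ∧ i < (g c').len := ⟨c, hc, hi⟩
    have hc' := Classical.choose_spec hex
    simp only [huval, dif_pos hex]
    rcases lt_trichotomy (Classical.choose hex) c with h | h | h
    · exact (hmono _ c h hc).1.2 i hc'.2
    · rw [h]
    · exact ((hmono c _ h hc'.1).1.2 i hi).symm
  set u := restrictFn2 uval L with hu
  have humem : u ∈ W := by
    refine hlim uval L hLord hLlim fun a ha => ?_
    obtain ⟨c, hc, hca⟩ := hexists a ha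
    rw [restrict_eq_restrict fun i hi => huv c i hc (hi.trans hca)]
    exact hres _ (hmem' c hc) a hca.le
  have huext : ∀ c, c < o → (g c).Ext u := by
    intro c hc
    refine ⟨hfle c hc, fun i hi => ?_⟩
    rw [show u.val i = (if i < L then uval i else false) from rfl,
      if_pos (lt_of_lt_of_le hi (hfle c hc))]
    exact (huv c i hc hi).symm
  refine ⟨u, humem, fun c hc => ⟨huext c hc, hstrict c hc⟩, hoL, hexists, ?_⟩
  intro hsall
  have : Splitting W (restrictFn2 uval L) := by
    refine hsplim uval L hLord hLlim fun a ha => ?_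
    obtain ⟨c, hc, hca⟩ := hexists a ha
    refine ⟨(g c).len, hca.le, hstrict c hc, ?_⟩
    rw [restrict_eq_restrict fun i hi => huv c i hc hi,
      canonical_restrict_self (hmem _ (hmem' c hc)).2]
    exact hsall c hc
  exact this

def ChainP (W : Set PreSeq2) (s : PreSeq2) (o : Ordinal) (prev : Ordinal → PreSeq2)
    (t : PreSeq2) : Prop :=
  t ∈ W ∧ s.Ext t ∧ o < t.len ∧ ∀ c, c < o → (prev c).Ext t ∧ (prev c).len < t.len

noncomputable def chainF (W : Set PreSeq2) (s : PreSeq2) : Ordinal → PreSeq2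
  | o => Classical.epsilon (ChainP W s o fun c => if h : c < o then chainF W s c else default)
  termination_by o => o

lemma chainP_congr {W s o prev prev'} (hprev : ∀ c < o, prev c = prev' c) :
    ChainP W s o prev = ChainP W s o prev' := by
  funext t
  unfold ChainP
  refine propext (and_congr_right fun _ => and_congr_right fun _ => and_congr_right fun _ => ?_)
  constructor <;> intro h c hc
  · rw [← hprev c hc]; exact h c hc
  · rw [hprev c hc]; exact h c hc

lemma chainF_def' (W : Set PreSeq2) (s : PreSeq2) (o : Ordinal) :
    chainF W s o = Classical.epsilon (ChainP W s o (chainF W s)) := by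
  rw [chainF]
  rw [chainP_congr (prev' := chainF W s) fun c hc => dif_pos hc]

lemma chain_spec {κ : Cardinal.{0}} {W : Set PreSeq2} (hreg : κ.IsRegular) (hW : IsSacks κ W)
    {s : PreSeq2} (hs : s ∈ W) :
    ∀ o < κ.ord, ChainP W s o (chainF W s) (chainF W s o) := by
  obtain ⟨hne, hmem, hres, hext, hlim, hsplit, hsplim⟩ := hW
  intro o
  induction o using Ordinal.induction with
  | _ o IH =>
  intro ho
  rw [chainF_def']
  apply Classical.epsilon_spec (p := ChainP W s o (chainF W s))
  rcases Ordinal.zero_or_succ_or_isSuccLimit o with h0 | ⟨c₀, hc₀⟩ | hlo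
  · subst h0
    obtain ⟨t, ht, hst, hlt⟩ := hext s hs
    exact ⟨t, ht, hst, lt_of_le_of_lt (zero_le) hlt,
      fun c hc => absurd hc not_lt_zero⟩
  · rw [← Ordinal.add_one_eq_succ, eq_comm] at hc₀
    have hc₀o : c₀ < o := hc₀ ▸ olt_add_one c₀
    have Sc := IH c₀ hc₀o (hc₀o.trans ho)
    obtain ⟨t, ht, het, hlt⟩ := hext (chainF W s c₀) Sc.1
    refine ⟨t, ht, ext_trans Sc.2.1 het, ?_, ?_⟩
    · rw [hc₀]
      exact lt_of_le_of_lt (oadd_one_le_iff.2 Sc.2.2.1) hlt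
    · intro c hc
      have hc' : c ≤ c₀ := olt_add_one_iff.1 (hc₀ ▸ hc)
      rcases hc'.lt_or_eq with h | h
      · exact ⟨ext_trans (Sc.2.2.2 c h).1 het, lt_trans (Sc.2.2.2 c h).2 hlt⟩
      · subst h; exact ⟨het, hlt⟩
  · have hspec : ∀ c, c < o → ChainP W s c (chainF W s) (chainF W s c) :=
      fun c hc => IH c hc (hc.trans ho)
    obtain ⟨u, humem, huext, hoL, hexists, _⟩ :=
      limit_union hreg ⟨hne, hmem, hres, hext, hlim, hsplit, hsplim⟩ ho hlo (chainF W s)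
        (fun c hc => (hspec c hc).1)
        (fun c c' h h' => (hspec c' h').2.2.2 c h)
        (fun c hc => ((hspec c hc).2.2.1).le)
    obtain ⟨t, ht, hut, hlt⟩ := hext u humem
    refine ⟨t, ht, ext_trans (ext_trans (hspec 0 hlo.pos).2.1 (huext 0 hlo.pos).1) hut,
      lt_of_le_of_lt hoL hlt, fun c hc => ?_⟩
    exact ⟨ext_trans (huext c hc).1 hut, lt_trans (huext c hc).2 hlt⟩

/-- Every node of a κ-Sacks tree lies on a branch. -/
lemma exists_branch {κ : Cardinal.{0}} {W : Set PreSeq2} (hreg : κ.IsRegular) (hW : IsSacks κ W)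
    {s : PreSeq2} (hs : s ∈ W) :
    ∃ x, x ∈ Branches2 κ W ∧ ∀ i < s.len, x i = s.val i := by
  classical
  have hκlim : Order.IsSuccLimit κ.ord := Cardinal.isSuccLimit_ord hreg.aleph0_le
  obtain ⟨hne, hmem, hres, hext, hlim, hsplit, hsplim⟩ := hW
  have hspec := chain_spec hreg ⟨hne, hmem, hres, hext, hlim, hsplit, hsplim⟩ hs
  set q := chainF W s with hq
  set x : Ordinal → Bool := fun i => if h : i + 1 < κ.ord then (q (i + 1)).val i else false
    with hx
  have key : ∀ a < κ.ord, restrictFn2 x a = restrictFn2 (q a).val a := by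
    intro a ha
    refine restrict_eq_restrict fun i hi => ?_
    have hi1 : i + 1 ≤ a := oadd_one_le_iff.2 hi
    have hiκ : i + 1 < κ.ord := lt_of_le_of_lt hi1 ha
    rw [hx]
    simp only [dif_pos hiκ]
    rcases hi1.lt_or_eq with h | h
    · exact ((hspec a ha).2.2.2 (i + 1) h).1.2 i
        (lt_of_lt_of_le (olt_add_one i) ((hspec (i + 1) hiκ).2.2.1).le)
    · rw [h]
  refine ⟨x, fun a ha => ?_, fun i hi => ?_⟩
  · rw [key a ha]
    exact hres _ (hspec a ha).1 a ((hspec a ha).2.2.1).le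
  · have hsl : s.len < κ.ord := (hmem s hs).1
    have hiκ : i + 1 < κ.ord := lt_of_le_of_lt (oadd_one_le_iff.2 hi) hsl
    rw [hx]
    simp only [dif_pos hiκ]
    exact ((hspec (i + 1) hiκ).2.1.2 i hi).symm

end SilverSacks
namespace SilverSacks

open Ordinal Set

def PhiP (T : Set PreSeq2) (x : Ordinal → Bool) (o : Ordinal) (prev : Ordinal → PreSeq2)
    (t : PreSeq2) : Prop :=
  t ∈ T ∧ Splitting T t ∧ o ≤ t.len ∧
  (∀ c, c < o → (prev c).Ext t ∧ (prev c).len < t.len ∧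
    (o = c + 1 → t.val (prev c).len = x c)) ∧
  (Order.IsSuccLimit o → ∀ a < t.len, ∃ c, c < o ∧ a < (prev c).len)

noncomputable def Phi (T : Set PreSeq2) (x : Ordinal → Bool) : Ordinal → PreSeq2
  | o => Classical.epsilon (PhiP T x o fun c => if h : c < o then Phi T x c else default)
  termination_by o => o

lemma phiP_congr {T x x' o prev prev'} (hprev : ∀ c < o, prev c = prev' c)
    (hx : ∀ c < o, x c = x' c) :
    PhiP T x o prev = PhiP T x' o prev' := by
  funext t
  unfold PhiP
  refine propext (and_congr_right fun _ => and_congr_right fun _ => and_congr_right fun _ => ?_)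
  refine and_congr ?_ ?_
  · refine forall_congr' fun c => ?_
    refine imp_congr_right fun hc => ?_
    rw [hprev c hc, hx c hc]
  · refine imp_congr_right fun _ => forall_congr' fun a => imp_congr_right fun _ => ?_
    refine exists_congr fun c => and_congr_right fun hc => ?_
    rw [hprev c hc]

lemma Phi_def' (T : Set PreSeq2) (x : Ordinal → Bool) (o : Ordinal) :
    Phi T x o = Classical.epsilon (PhiP T x o (Phi T x)) := by
  rw [Phi]
  rw [phiP_congr (prev' := Phi T x) (x' := x) (fun c hc => dif_pos hc) (fun _ _ => rfl)]

lemma phi_local (T : Set PreSeq2) {x x' : Ordinal → Bool} :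
    ∀ o, (∀ i < o, x i = x' i) → Phi T x o = Phi T x' o := by
  intro o
  induction o using Ordinal.induction with
  | _ o IH =>
  intro h
  rw [Phi_def', Phi_def',
    phiP_congr (prev' := Phi T x') (x' := x')
      (fun c hc => IH c hc fun i hi => h i (hi.trans hc)) (fun c hc => h c hc)]

lemma phi_spec {κ : Cardinal.{0}} {T : Set PreSeq2} (hreg : κ.IsRegular) (hT : IsSacks κ T)
    (x : Ordinal → Bool) :
    ∀ o < κ.ord, PhiP T x o (Phi T x) (Phi T x o) := by
  obtain ⟨hne, hmem, hres, hext, hlim, hsplit, hsplim⟩ := hT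
  have hroot : (⟨0, fun _ => false⟩ : PreSeq2) ∈ T := by
    obtain ⟨s0, hs0⟩ := hne
    have h := hres s0 hs0 0 (zero_le)
    have he : restrictFn2 s0.val 0 = (⟨0, fun _ => false⟩ : PreSeq2) :=
      PreSeq2.ext2 rfl fun i => if_neg not_lt_zero
    rwa [he] at h
  intro o
  induction o using Ordinal.induction with
  | _ o IH =>
  intro ho
  rw [Phi_def']
  apply Classical.epsilon_spec (p := PhiP T x o (Phi T x))
  rcases Ordinal.zero_or_succ_or_isSuccLimit o with h0 | ⟨c₀, hc₀⟩ | hlo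
  · subst h0
    obtain ⟨t, ht, hrt, hsplt⟩ := hsplit _ hroot
    exact ⟨t, ht, hsplt, zero_le,
      fun c hc => absurd hc not_lt_zero,
      fun hl => absurd hl Ordinal.not_isSuccLimit_zero⟩
  · rw [← Ordinal.add_one_eq_succ, eq_comm] at hc₀
    have hc₀o : c₀ < o := hc₀ ▸ olt_add_one c₀
    have Sc := IH c₀ hc₀o (hc₀o.trans ho)
    set Pc := Phi T x c₀ with hPc
    have hsnoc : Pc.snoc (x c₀) ∈ T := by
      cases hxc : x c₀
      · exact Sc.2.1.1
      · exact Sc.2.1.2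
    obtain ⟨t, ht, hvt, hsplt⟩ := hsplit _ hsnoc
    have hlen1 : Pc.len < t.len := by
      have : Pc.len < (Pc.snoc (x c₀)).len := by rw [snoc_len]; exact olt_add_one _
      exact lt_of_lt_of_le this hvt.1
    refine ⟨t, ht, hsplt, ?_, ?_, ?_⟩
    · rw [hc₀, oadd_one_le_iff]
      exact lt_of_le_of_lt Sc.2.2.1 hlen1
    · intro c hc
      have hc' : c ≤ c₀ := olt_add_one_iff.1 (hc₀ ▸ hc)
      rcases hc'.lt_or_eq with h | h
      · refine ⟨ext_trans (Sc.2.2.2.1 c h).1 (ext_trans (ext_snoc _ _) hvt),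
          lt_trans (Sc.2.2.2.1 c h).2.1 hlen1, fun he => ?_⟩
        exact absurd (oadd_one_inj (hc₀.symm.trans he)) (ne_of_gt h)
      · subst h
        refine ⟨ext_trans (ext_snoc _ _) hvt, hlen1, fun _ => ?_⟩
        have h1 : t.val Pc.len = (Pc.snoc (x c)).val Pc.len := by
          refine (hvt.2 Pc.len ?_).symm
          rw [snoc_len]; exact olt_add_one _
        rw [h1, snoc_val_len]
    · intro hl
      exfalso
      have := hl.succ_lt hc₀o
      rw [← Ordinal.add_one_eq_succ, ← hc₀] at this
      exact lt_irrefl o this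
  · have hspec : ∀ c, c < o → PhiP T x c (Phi T x) (Phi T x c) := fun c hc => IH c hc (hc.trans ho)
    obtain ⟨u, humem, huext, hoL, hexists, husplit⟩ :=
      limit_union hreg ⟨hne, hmem, hres, hext, hlim, hsplit, hsplim⟩ ho hlo (Phi T x)
        (fun c hc => (hspec c hc).1)
        (fun c c' h h' => ⟨((hspec c' h').2.2.2.1 c h).1, ((hspec c' h').2.2.2.1 c h).2.1⟩)
        (fun c hc => (hspec c hc).2.2.1)
    refine ⟨u, humem, husplit (fun c hc => (hspec c hc).2.1), hoL, ?_, fun _ => hexists⟩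
    intro c hc
    refine ⟨(huext c hc).1, (huext c hc).2, fun he => ?_⟩
    exfalso
    have := hlo.succ_lt hc
    rw [← Ordinal.add_one_eq_succ, ← he] at this
    exact lt_irrefl o this

section PhiFacts

variable {κ : Cardinal.{0}} {T : Set PreSeq2} (hreg : κ.IsRegular) (hT : IsSacks κ T)
  {x : Ordinal → Bool}

include hreg hT

lemma phi_mem {o : Ordinal} (ho : o < κ.ord) : Phi T x o ∈ T := (phi_spec hreg hT x o ho).1

lemma phi_splitting {o : Ordinal} (ho : o < κ.ord) : Splitting T (Phi T x o) :=
  (phi_spec hreg hT x o ho).2.1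

lemma phi_le_len {o : Ordinal} (ho : o < κ.ord) : o ≤ (Phi T x o).len :=
  (phi_spec hreg hT x o ho).2.2.1

lemma phi_len_lt_ord {o : Ordinal} (ho : o < κ.ord) : (Phi T x o).len < κ.ord :=
  (hT.2.1 _ (phi_mem hreg hT ho)).1

lemma phi_canonical {o : Ordinal} (ho : o < κ.ord) : (Phi T x o).Canonical :=
  (hT.2.1 _ (phi_mem hreg hT ho)).2

lemma phi_ext {c o : Ordinal} (hco : c < o) (ho : o < κ.ord) :
    (Phi T x c).Ext (Phi T x o) :=
  ((phi_spec hreg hT x o ho).2.2.2.1 c hco).1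

lemma phi_len_lt {c o : Ordinal} (hco : c < o) (ho : o < κ.ord) :
    (Phi T x c).len < (Phi T x o).len :=
  ((phi_spec hreg hT x o ho).2.2.2.1 c hco).2.1

lemma phi_len_le {c o : Ordinal} (hco : c ≤ o) (ho : o < κ.ord) :
    (Phi T x c).len ≤ (Phi T x o).len := by
  rcases hco.lt_or_eq with h | h
  · exact (phi_len_lt hreg hT h ho).le
  · rw [h]

lemma phi_bit {c : Ordinal} (hc : c + 1 < κ.ord) :
    (Phi T x (c + 1)).val (Phi T x c).len = x c :=
  ((phi_spec hreg hT x (c + 1) hc).2.2.2.1 c (olt_add_one c)).2.2 rfl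

lemma phi_limit {o : Ordinal} (ho : o < κ.ord) (hlo : Order.IsSuccLimit o) :
    ∀ a < (Phi T x o).len, ∃ c, c < o ∧ a < (Phi T x c).len :=
  (phi_spec hreg hT x o ho).2.2.2.2 hlo

end PhiFacts

noncomputable def phiB (T : Set PreSeq2) (x : Ordinal → Bool) (i : Ordinal) : Bool :=
  (Phi T x (i + 1)).val i

lemma phiB_local {T : Set PreSeq2} {x x' : Ordinal → Bool} {i : Ordinal}
    (h : ∀ j < i + 1, x j = x' j) : phiB T x i = phiB T x' i := by
  unfold phiB
  rw [phi_local T (i + 1) h]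

section PhiBFacts

variable {κ : Cardinal.{0}} {T : Set PreSeq2} (hreg : κ.IsRegular) (hT : IsSacks κ T)
  {x : Ordinal → Bool}

include hreg hT

lemma phiB_coh {o : Ordinal} (ho : o < κ.ord) {i : Ordinal} (hi : i < (Phi T x o).len) :
    phiB T x i = (Phi T x o).val i := by
  have hκlim : Order.IsSuccLimit κ.ord := Cardinal.isSuccLimit_ord hreg.aleph0_le
  have hiκ : i < κ.ord := lt_trans hi (phi_len_lt_ord hreg hT ho)
  have hsi : i + 1 < κ.ord := oadd_one_lt hκlim hiκ
  rcases lt_trichotomy (i + 1) o with h | h | h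
  · exact (phi_ext hreg hT h ho).2 i
      (lt_of_lt_of_le (olt_add_one i) (phi_le_len hreg hT hsi))
  · unfold phiB; rw [h]
  · exact ((phi_ext hreg hT h hsi).2 i hi).symm

lemma phiB_bit {c : Ordinal} (hc : c < κ.ord) :
    phiB T x ((Phi T x c).len) = x c := by
  have hκlim : Order.IsSuccLimit κ.ord := Cardinal.isSuccLimit_ord hreg.aleph0_le
  have hc1 : c + 1 < κ.ord := oadd_one_lt hκlim hc
  have hj : (Phi T x c).len < κ.ord := phi_len_lt_ord hreg hT hc
  have hj1 : (Phi T x c).len + 1 < κ.ord := oadd_one_lt hκlim hj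
  have hbit := phi_bit hreg hT (x := x) hc1
  have hcj : c + 1 ≤ (Phi T x c).len + 1 := by
    rw [oadd_one_le_iff, olt_add_one_iff]
    exact phi_le_len hreg hT hc
  rcases hcj.lt_or_eq with h | h
  · have := (phi_ext hreg hT h hj1).2 ((Phi T x c).len) (phi_len_lt hreg hT (olt_add_one c) hc1)
    unfold phiB
    rw [← this, hbit]
  · unfold phiB
    rw [← h, hbit]

lemma phiB_restrict_mem {a : Ordinal} (ha : a < κ.ord) :
    restrictFn2 (phiB T x) a ∈ T := by
  have h1 : restrictFn2 (phiB T x) a = restrictFn2 (Phi T x a).val a :=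
    restrict_eq_restrict fun i hi =>
      phiB_coh hreg hT ha (lt_of_lt_of_le hi (phi_le_len hreg hT ha))
  rw [h1]
  exact hT.2.2.1 _ (phi_mem hreg hT ha) a (phi_le_len hreg hT ha)

lemma stage_agree {x' : Ordinal → Bool} {m : Ordinal}
    (hag : ∀ i < m, phiB T x i = phiB T x' i) :
    ∀ d < κ.ord, (Phi T x d).len < m → x d = x' d := by
  intro d
  induction d using Ordinal.induction with
  | _ d IH =>
  intro hd hlen
  have hxx : ∀ j < d, x j = x' j := fun j hj =>
    IH j hj (hj.trans hd) (lt_trans (phi_len_lt hreg hT hj hd) hlen)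
  have hPP : Phi T x d = Phi T x' d := phi_local T d hxx
  calc x d = phiB T x ((Phi T x d).len) := (phiB_bit hreg hT hd).symm
    _ = phiB T x' ((Phi T x d).len) := hag _ hlen
    _ = phiB T x' ((Phi T x' d).len) := by rw [hPP]
    _ = x' d := phiB_bit hreg hT hd

end PhiBFacts

end SilverSacks
namespace SilverSacks

open Ordinal Set

/-- The adjusted branch map: `phiB` below `κ.ord`, the identity above. -/
noncomputable def phiB' (κ : Cardinal) (T : Set PreSeq2) (x : Ordinal → Bool) :
    Ordinal → Bool :=
  fun i => if i < κ.ord then phiB T x i else x i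

lemma phiB'_continuous (κ : Cardinal.{0}) (T : Set PreSeq2) :
    @Continuous _ _ (boundedTop2 κ) (boundedTop2 κ) (phiB' κ T) := by
  letI : TopologicalSpace (Ordinal → Bool) := boundedTop2 κ
  rw [show boundedTop2 κ = TopologicalSpace.generateFrom
    { U | ∃ a < κ.ord, ∃ s : Ordinal → Bool, U = { x | ∀ i < a, x i = s i } } from rfl,
    continuous_generateFrom_iff]
  rintro U ⟨a, ha, s, rfl⟩
  have hkey : ∀ x x' : Ordinal → Bool, (∀ i < a, x' i = x i) → ∀ i, i < a →
      phiB' κ T x' i = phiB' κ T x i := by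
    intro x x' hxx i hi
    unfold phiB'
    by_cases hiκ : i < κ.ord
    · rw [if_pos hiκ, if_pos hiκ]
      exact phiB_local fun j hj => hxx j (lt_of_lt_of_le hj (oadd_one_le_iff.2 hi))
    · rw [if_neg hiκ, if_neg hiκ]
      exact hxx i hi
  have heq : phiB' κ T ⁻¹' { y | ∀ i < a, y i = s i } =
      ⋃ x ∈ phiB' κ T ⁻¹' { y | ∀ i < a, y i = s i },
        { x' : Ordinal → Bool | ∀ i < a, x' i = x i } := by
    ext x'
    simp only [mem_preimage, mem_setOf_eq, mem_iUnion, exists_prop]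
    constructor
    · intro hx'
      exact ⟨x', hx', fun i _ => rfl⟩
    · rintro ⟨x, hx, hxx⟩
      intro i hi
      rw [hkey x x' hxx i hi]
      exact hx i hi
  rw [heq]
  exact isOpen_biUnion fun x _ =>
    TopologicalSpace.isOpen_generateFrom_of_mem ⟨a, ha, x, rfl⟩

/-- The full binary tree of height `κ`. -/
def fullC (κ : Cardinal) : Set PreSeq2 := { s | s.len < κ.ord ∧ s.Canonical }

lemma fullC_silver {κ : Cardinal.{0}} (hreg : κ.IsRegular) : IsSilver κ (fullC κ) := by
  have hκlim : Order.IsSuccLimit κ.ord := Cardinal.isSuccLimit_ord hreg.aleph0_le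
  have hsnocmem : ∀ s ∈ fullC κ, ∀ b, PreSeq2.snoc s b ∈ fullC κ := by
    intro s hs b
    refine ⟨?_, snoc_canonical s b⟩
    rw [snoc_len]
    exact oadd_one_lt hκlim hs.1
  refine ⟨⟨?_, ?_, ?_, ?_, ?_, ?_, ?_⟩, ?_⟩
  · exact ⟨⟨0, fun _ => false⟩, hκlim.pos, fun _ _ => rfl⟩
  · exact fun s hs => hs
  · exact fun s hs a ha => ⟨lt_of_le_of_lt ha hs.1, restrict_canonical _ _⟩
  · intro s hs
    refine ⟨s.snoc false, hsnocmem s hs false, ext_snoc s false, ?_⟩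
    rw [snoc_len]; exact olt_add_one _
  · exact fun x l hl _ _ => ⟨hl, restrict_canonical _ _⟩
  · intro s hs
    exact ⟨s, hs, ext_refl s, hsnocmem s hs false, hsnocmem s hs true⟩
  · intro x l hl _ _
    have hm : restrictFn2 x l ∈ fullC κ := ⟨hl, restrict_canonical _ _⟩
    exact ⟨hsnocmem _ hm false, hsnocmem _ hm true⟩
  · intro s hs t ht _ b
    constructor <;> intro _
    · exact hsnocmem t ht b
    · exact hsnocmem s hs b

noncomputable def liftFn (T : Set PreSeq2) (l : Ordinal) (y : Ordinal → Bool) :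
    Ordinal → Bool
  | d => if (Phi T (fun i => if h : i < d then liftFn T l y i else false) d).len < l
      then y ((Phi T (fun i => if h : i < d then liftFn T l y i else false) d).len) else false
  termination_by d => d

lemma liftFn_eq (T : Set PreSeq2) (l : Ordinal) (y : Ordinal → Bool) (d : Ordinal) :
    liftFn T l y d = if (Phi T (liftFn T l y) d).len < l
      then y ((Phi T (liftFn T l y) d).len) else false := by
  rw [liftFn]
  have h : Phi T (fun i => if h : i < d then liftFn T l y i else false) d
      = Phi T (liftFn T l y) d := phi_local T d fun i hi => dif_pos hi
  rw [h]

/-- Key lifting lemma: a function whose proper initial segments are all matched by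
`phiB`-images of branches of `S` is itself matched (below `l`) by a single branch. -/
lemma lift_branch {κ : Cardinal.{0}} {T S : Set PreSeq2} (hreg : κ.IsRegular)
    (hT : IsSacks κ T) (hS : IsSacks κ S) {l : Ordinal} (hl : l ≤ κ.ord) (hllim : Order.IsSuccLimit l)
    {y : Ordinal → Bool}
    (h : ∀ a < l, ∃ x ∈ Branches2 κ S, ∀ i < a, y i = phiB T x i) :
    ∃ p ∈ Branches2 κ S, ∀ i < l, y i = phiB T p i := by
  classical
  have hκlim : Order.IsSuccLimit κ.ord := Cardinal.isSuccLimit_ord hreg.aleph0_le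
  choose xa hxaBr hxaAg using h
  set q := liftFn T l y with hqdef
  set Lq : Ordinal → Ordinal := fun d => (Phi T q d).len with hLqdef
  have hqe : ∀ d, q d = if Lq d < l then y (Lq d) else false := by
    intro d
    rw [hqdef]
    exact liftFn_eq T l y d
  have hmonoLq : ∀ {j i : Ordinal}, j < i → i < κ.ord → Lq j < Lq i :=
    fun hj hi => phi_len_lt hreg hT hj hi
  have hLqle : ∀ {j i : Ordinal}, j ≤ i → i < κ.ord → Lq j ≤ Lq i :=
    fun hj hi => phi_len_le hreg hT hj hi
  have hM : ∀ a, ∀ ha : a < l, ∀ i, i < κ.ord → Lq i < a → q i = xa a ha i := by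
    intro a ha i
    induction i using Ordinal.induction with
    | _ i IH =>
    intro hiκ hla
    have hq : ∀ j < i, q j = xa a ha j := fun j hj =>
      IH j hj (hj.trans hiκ) (lt_trans (hmonoLq hj hiκ) hla)
    have hPhi : Phi T q i = Phi T (xa a ha) i := phi_local T i hq
    have hll : Lq i < l := hla.trans ha
    rw [hqe i, if_pos hll, hxaAg a ha (Lq i) hla]
    show phiB T (xa a ha) ((Phi T q i).len) = xa a ha i
    rw [hPhi]
    exact phiB_bit hreg hT hiκ
  have hqS1 : ∀ c, c < κ.ord → (∃ a, ∃ _ : a < l, ∀ j < c, Lq j < a) →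
      restrictFn2 q c ∈ S := by
    rintro c hc ⟨a, ha, haj⟩
    rw [restrict_eq_restrict fun j hj => hM a ha j (hj.trans hc) (haj j hj)]
    exact hxaBr a ha c hc
  have hqS : ∀ c, c < κ.ord → (∀ j < c, Lq j < l) → restrictFn2 q c ∈ S := by
    intro c hc hbelow
    by_cases hb : ∃ a, ∃ _ : a < l, ∀ j < c, Lq j < a
    · exact hqS1 c hc hb
    · rcases Ordinal.zero_or_succ_or_isSuccLimit c with rfl | ⟨e, hce⟩ | hcl
      · exact absurd ⟨0 + 1, oadd_one_lt hllim hllim.pos,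
          fun j hj => absurd hj not_lt_zero⟩ hb
      · exfalso
        rw [← Ordinal.add_one_eq_succ, eq_comm] at hce
        have he : e < c := hce ▸ olt_add_one e
        refine hb ⟨Lq e + 1, oadd_one_lt hllim (hbelow e he), fun j hj => ?_⟩
        have hje : j ≤ e := olt_add_one_iff.1 (hce ▸ hj)
        exact lt_of_le_of_lt (hLqle hje (he.trans hc)) (olt_add_one _)
      · refine hS.2.2.2.2.1 q c hc hcl fun a' ha' => ?_
        refine hqS1 a' (ha'.trans hc) ⟨Lq a' + 1, oadd_one_lt hllim (hbelow a' ha'),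
          fun j hj => lt_trans (hmonoLq hj (ha'.trans hc)) (olt_add_one _)⟩
  by_cases hcstar : ∃ c, c < κ.ord ∧ l ≤ Lq c
  · set Cset := {c : Ordinal | c < κ.ord ∧ l ≤ Lq c} with hCset
    have hCne : Cset.Nonempty := hcstar
    set c₀ := sInf Cset with hc₀def
    have hc₀mem : c₀ ∈ Cset := csInf_mem hCne
    have hbelow : ∀ j < c₀, Lq j < l := by
      intro j hj
      by_contra hcon
      have hjC : j ∈ Cset := ⟨hj.trans hc₀mem.1, not_lt.1 hcon⟩
      exact absurd (csInf_le (OrderBot.bddBelow _) hjC) (not_le.2 hj)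
    have hnode : restrictFn2 q c₀ ∈ S := hqS c₀ hc₀mem.1 hbelow
    obtain ⟨p, hpBr, hpq⟩ := exists_branch hreg hS hnode
    have hpq' : ∀ i < c₀, p i = q i := by
      intro i hi
      have := hpq i (by rwa [restrict_len])
      rwa [restrict_val_lt hi] at this
    have hPc : Phi T p c₀ = Phi T q c₀ := phi_local T c₀ hpq'
    have hlc₀ : l ≤ (Phi T p c₀).len := by rw [hPc]; exact hc₀mem.2
    refine ⟨p, hpBr, fun i hi => ?_⟩
    have hclaim : ∃ c a, ∃ _ : a < l, c ≤ c₀ ∧ i < Lq c ∧ i < a ∧ ∀ j < c, Lq j < a := by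
      rcases Ordinal.zero_or_succ_or_isSuccLimit c₀ with h0 | ⟨e, hce⟩ | hcl
      · refine ⟨c₀, i + 1, oadd_one_lt hllim hi, le_rfl, lt_of_lt_of_le hi hc₀mem.2,
          olt_add_one i, fun j hj => ?_⟩
        rw [h0] at hj
        exact absurd hj not_lt_zero
      · rw [← Ordinal.add_one_eq_succ, eq_comm] at hce
        have he : e < c₀ := hce ▸ olt_add_one e
        have hLe : Lq e < l := hbelow e he
        refine ⟨c₀, max (Lq e) i + 1, oadd_one_lt hllim (max_lt hLe hi), le_rfl,
          lt_of_lt_of_le hi hc₀mem.2,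
          lt_of_le_of_lt (le_max_right _ _) (olt_add_one _), fun j hj => ?_⟩
        have hje : j ≤ e := olt_add_one_iff.1 (hce ▸ hj)
        exact lt_of_le_of_lt ((hLqle hje (he.trans hc₀mem.1)).trans (le_max_left _ _))
          (olt_add_one _)
      · by_cases hbd : ∃ a₀, ∃ _ : a₀ < l, ∀ j < c₀, Lq j < a₀
        · obtain ⟨a₀, ha₀, haj⟩ := hbd
          exact ⟨c₀, max a₀ i + 1, oadd_one_lt hllim (max_lt ha₀ hi), le_rfl,
            lt_of_lt_of_le hi hc₀mem.2,
            lt_of_le_of_lt (le_max_right _ _) (olt_add_one _),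
            fun j hj => lt_of_lt_of_le (haj j hj)
              ((le_max_left _ _).trans (olt_add_one _).le)⟩
        · have hbd' : ∃ j, j < c₀ ∧ ¬ Lq j < i + 1 := by
            by_contra hcon
            push_neg at hcon
            exact hbd ⟨i + 1, oadd_one_lt hllim hi, hcon⟩
          obtain ⟨j, hj, hij⟩ := hbd'
          have hiLj : i < Lq j := lt_of_lt_of_le (olt_add_one i) (not_lt.1 hij)
          exact ⟨j, Lq j + 1, oadd_one_lt hllim (hbelow j hj), hj.le, hiLj,
            lt_trans hiLj (olt_add_one _),
            fun j' hj' => lt_trans (hmonoLq hj' (hj.trans hc₀mem.1)) (olt_add_one _)⟩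
    obtain ⟨c, a, ha, hcc₀, hiLc, hia, hja⟩ := hclaim
    have hcκ : c < κ.ord := lt_of_le_of_lt hcc₀ hc₀mem.1
    have hqx : ∀ j < c, q j = xa a ha j := fun j hj => hM a ha j (hj.trans hcκ) (hja j hj)
    have hP1 : Phi T q c = Phi T (xa a ha) c := phi_local T c hqx
    have hv1 : (Phi T q c).val i = y i := by
      rw [hP1]
      have h2 : phiB T (xa a ha) i = (Phi T (xa a ha) c).val i :=
        phiB_coh hreg hT hcκ (by rw [← hP1]; exact hiLc)
      rw [← h2, ← hxaAg a ha i hia]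
    have hv2 : (Phi T q c₀).val i = (Phi T q c).val i := by
      rcases hcc₀.lt_or_eq with h' | h'
      · exact ((phi_ext hreg hT h' hc₀mem.1).2 i hiLc).symm
      · rw [h']
    have hv3 : phiB T p i = (Phi T p c₀).val i :=
      phiB_coh hreg hT hc₀mem.1 (lt_of_lt_of_le hi hlc₀)
    rw [hv3, hPc, hv2, hv1]
  · have hall : ∀ c, c < κ.ord → Lq c < l := by
      intro c hc
      by_contra hcon
      exact hcstar ⟨c, hc, not_lt.1 hcon⟩
    have hqBr : q ∈ Branches2 κ S := fun c hc => hqS c hc fun j hj => hall j (hj.trans hc)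
    refine ⟨q, hqBr, fun i hi => ?_⟩
    have hiκ : i < κ.ord := lt_of_lt_of_le hi hl
    have hi1 : i + 1 < κ.ord := oadd_one_lt hκlim hiκ
    have ha : Lq (i + 1) + 1 < l := oadd_one_lt hllim (hall (i + 1) hi1)
    have hqx : ∀ j < i + 1, q j = xa (Lq (i + 1) + 1) ha j := fun j hj =>
      hM _ ha j (hj.trans hi1) (lt_trans (hmonoLq hj hi1) (olt_add_one _))
    have hP1 : Phi T q (i + 1) = Phi T (xa (Lq (i + 1) + 1) ha) (i + 1) :=
      phi_local T (i + 1) hqx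
    have hiL : i < Lq (i + 1) := lt_of_lt_of_le (olt_add_one i) (phi_le_len hreg hT hi1)
    rw [hxaAg _ ha i (lt_trans hiL (olt_add_one _))]
    show phiB T (xa (Lq (i + 1) + 1) ha) i = phiB T q i
    show (Phi T (xa (Lq (i + 1) + 1) ha) (i + 1)).val i = (Phi T q (i + 1)).val i
    rw [hP1]

end SilverSacks
namespace SilverSacks

open Ordinal Set

/-- The image tree: restrictions of `phiB`-images of branches of `S`. -/
def sacksImage (κ : Cardinal) (T S : Set PreSeq2) : Set PreSeq2 :=
  { u | ∃ x ∈ Branches2 κ S, ∃ a, a < κ.ord ∧ u = restrictFn2 (phiB T x) a }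

/-- Characterization of splitting nodes of the image tree. -/
lemma spl_char {κ : Cardinal.{0}} {T S : Set PreSeq2} (hreg : κ.IsRegular)
    (hT : IsSacks κ T) (hS : IsSacks κ S) {v : PreSeq2}
    (hv : Splitting (sacksImage κ T S) v) :
    ∃ w ∈ Branches2 κ S, ∃ d, d < κ.ord ∧ (Phi T w d).len = v.len ∧
      (∀ i < v.len, phiB T w i = v.val i) ∧ Splitting S (restrictFn2 w d) := by
  classical
  have hκlim : Order.IsSuccLimit κ.ord := Cardinal.isSuccLimit_ord hreg.aleph0_le
  obtain ⟨w0, hw0, a0, ha0, he0⟩ := hv.1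
  obtain ⟨w1, hw1, a1, ha1, he1⟩ := hv.2
  have hl0 : v.len + 1 = a0 := by
    have := congrArg PreSeq2.len he0
    rwa [snoc_len, restrict_len] at this
  have hl1 : v.len + 1 = a1 := by
    have := congrArg PreSeq2.len he1
    rwa [snoc_len, restrict_len] at this
  have hv0 : ∀ i < v.len + 1, (PreSeq2.snoc v false).val i = phiB T w0 i := by
    intro i hi
    have h2 : (PreSeq2.snoc v false).val i = (restrictFn2 (phiB T w0) a0).val i := by rw [he0]
    rwa [restrict_val_lt (hl0 ▸ hi)] at h2
  have hv1 : ∀ i < v.len + 1, (PreSeq2.snoc v true).val i = phiB T w1 i := by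
    intro i hi
    have h2 : (PreSeq2.snoc v true).val i = (restrictFn2 (phiB T w1) a1).val i := by rw [he1]
    rwa [restrict_val_lt (hl1 ▸ hi)] at h2
  have hval0 : ∀ i < v.len, phiB T w0 i = v.val i := fun i hi => by
    rw [← hv0 i (hi.trans (olt_add_one _)), snoc_val_lt hi]
  have hval1 : ∀ i < v.len, phiB T w1 i = v.val i := fun i hi => by
    rw [← hv1 i (hi.trans (olt_add_one _)), snoc_val_lt hi]
  have hbit0 : phiB T w0 v.len = false := by
    rw [← hv0 v.len (olt_add_one _), snoc_val_len]
  have hbit1 : phiB T w1 v.len = true := by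
    rw [← hv1 v.len (olt_add_one _), snoc_val_len]
  have hulκ : v.len < κ.ord := lt_trans (olt_add_one _) (hl0 ▸ ha0)
  have hneq : ∃ j, j < κ.ord ∧ w0 j ≠ w1 j := by
    by_contra hcon
    push_neg at hcon
    have h3 : phiB T w0 v.len = phiB T w1 v.len :=
      phiB_local fun j hj => hcon j (lt_of_le_of_lt (olt_add_one_iff.1 hj) hulκ)
    rw [hbit0, hbit1] at h3
    exact Bool.false_ne_true h3
  set D := {j : Ordinal | j < κ.ord ∧ w0 j ≠ w1 j} with hD
  have hDne : D.Nonempty := hneq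
  set d := sInf D with hd
  have hdmem : d ∈ D := csInf_mem hDne
  have hagree : ∀ j < d, w0 j = w1 j := by
    intro j hj
    by_contra hcon
    have hjD : j ∈ D := ⟨hj.trans hdmem.1, hcon⟩
    exact absurd (csInf_le (OrderBot.bddBelow _) hjD) (not_le.2 hj)
  have hPhid : Phi T w0 d = Phi T w1 d := phi_local T d hagree
  have hb0 : phiB T w0 ((Phi T w0 d).len) = w0 d := phiB_bit hreg hT hdmem.1
  have hb1 : phiB T w1 ((Phi T w0 d).len) = w1 d := by
    rw [hPhid]; exact phiB_bit hreg hT hdmem.1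
  have hm : (Phi T w0 d).len = v.len := by
    rcases lt_trichotomy ((Phi T w0 d).len) v.len with h | h | h
    · exfalso
      apply hdmem.2
      rw [← hb0, ← hb1, hval0 _ h, hval1 _ h]
    · exact h
    · exfalso
      have h1 : phiB T w0 v.len = (Phi T w0 d).val v.len := phiB_coh hreg hT hdmem.1 h
      have h2 : phiB T w1 v.len = (Phi T w1 d).val v.len :=
        phiB_coh hreg hT hdmem.1 (hPhid ▸ h)
      rw [hbit0] at h1
      rw [hbit1, ← hPhid] at h2
      exact Bool.false_ne_true (h1.trans h2.symm)
  have hd1κ : d + 1 < κ.ord := oadd_one_lt hκlim hdmem.1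
  have hsn : ∀ wb : Ordinal → Bool, wb ∈ Branches2 κ S → (∀ j < d, wb j = w0 j) →
      PreSeq2.snoc (restrictFn2 w0 d) (wb d) ∈ S := by
    intro wb hwb hagr
    have h4 : PreSeq2.snoc (restrictFn2 w0 d) (wb d) = restrictFn2 wb (d + 1) := by
      refine snoc_eq_restrict (fun i hi => ?_) rfl
      rw [restrict_len] at hi
      rw [restrict_val_lt hi, hagr i hi]
    rw [h4]
    exact hwb (d + 1) hd1κ
  have h0' := hsn w0 hw0 fun j _ => rfl
  have h1' := hsn w1 hw1 fun j hj => (hagree j hj).symm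
  have hcover : ∀ b : Bool, PreSeq2.snoc (restrictFn2 w0 d) b ∈ S := by
    intro b
    by_cases hbw : b = w0 d
    · rw [hbw]; exact h0'
    · have hb1' : b = w1 d := by
        have hne' := hdmem.2
        rcases Bool.eq_false_or_eq_true b with rfl | rfl <;>
          rcases Bool.eq_false_or_eq_true (w0 d) with h0v | h0v <;>
          rcases Bool.eq_false_or_eq_true (w1 d) with h1v | h1v <;>
          simp_all
      rw [hb1']; exact h1'
  exact ⟨w0, hw0, d, hdmem.1, hm, hval0, hcover false, hcover true⟩

lemma sacksImage_isSacks {κ : Cardinal.{0}} {T S : Set PreSeq2} (hreg : κ.IsRegular)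
    (hT : IsSacks κ T) (hS : IsSacks κ S) : IsSacks κ (sacksImage κ T S) := by
  classical
  have hκlim : Order.IsSuccLimit κ.ord := Cardinal.isSuccLimit_ord hreg.aleph0_le
  have hfromS' : ∀ {y : Ordinal → Bool} {a b : Ordinal},
      restrictFn2 y a ∈ sacksImage κ T S → b ≤ a →
      ∃ x ∈ Branches2 κ S, ∀ i < b, y i = phiB T x i := by
    intro y a b hmem hba
    obtain ⟨x, hx, a', ha', he⟩ := hmem
    have haa : a = a' := by
      have := congrArg PreSeq2.len he
      rwa [restrict_len, restrict_len] at this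
    refine ⟨x, hx, fun i hi => ?_⟩
    have hia : i < a := lt_of_lt_of_le hi hba
    have hval : (restrictFn2 y a).val i = (restrictFn2 (phiB T x) a').val i := by rw [he]
    rwa [restrict_val_lt hia, restrict_val_lt (haa ▸ hia)] at hval
  refine ⟨?_, ?_, ?_, ?_, ?_, ?_, ?_⟩
  · obtain ⟨s0, hs0⟩ := hS.1
    obtain ⟨x, hx, _⟩ := exists_branch hreg hS hs0
    exact ⟨_, x, hx, 0, hκlim.pos, rfl⟩
  · rintro u ⟨x, hx, a, ha, rfl⟩
    exact ⟨by rw [restrict_len]; exact ha, restrict_canonical _ _⟩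
  · rintro u ⟨x, hx, a, ha, rfl⟩ b hb
    rw [restrict_len] at hb
    rw [restrict_restrict hb]
    exact ⟨x, hx, b, lt_of_le_of_lt hb ha, rfl⟩
  · rintro u ⟨x, hx, a, ha, rfl⟩
    refine ⟨restrictFn2 (phiB T x) (a + 1), ⟨x, hx, a + 1, oadd_one_lt hκlim ha, rfl⟩,
      ext_restrict (olt_add_one a).le, ?_⟩
    rw [restrict_len, restrict_len]
    exact olt_add_one a
  · intro y l hlκ hllim hsub
    have h' : ∀ a < l, ∃ x ∈ Branches2 κ S, ∀ i < a, y i = phiB T x i :=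
      fun a ha => hfromS' (hsub a ha) le_rfl
    obtain ⟨p, hp, hmatch⟩ := lift_branch hreg hT hS hlκ.le hllim h'
    rw [restrict_eq_restrict hmatch]
    exact ⟨p, hp, l, hlκ, rfl⟩
  · rintro u ⟨x, hx, a, ha, rfl⟩
    obtain ⟨tS, htS, hxt, hsplS⟩ := hS.2.2.2.2.2.1 _ (hx a ha)
    have hc₁κ : tS.len < κ.ord := (hS.2.1 tS htS).1
    have hac₁ : a ≤ tS.len := by
      have := hxt.1
      rwa [restrict_len] at this
    have hyb : ∀ b : Bool, ∃ yb, yb ∈ Branches2 κ S ∧ (∀ i < tS.len, yb i = tS.val i) ∧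
        yb tS.len = b := by
      intro b
      have hsb : PreSeq2.snoc tS b ∈ S := by cases b; exacts [hsplS.1, hsplS.2]
      obtain ⟨yb, hybBr, hybAg⟩ := exists_branch hreg hS hsb
      refine ⟨yb, hybBr, fun i hi => ?_, ?_⟩
      · have := hybAg i (by rw [snoc_len]; exact hi.trans (olt_add_one _))
        rwa [snoc_val_lt hi] at this
      · have := hybAg tS.len (by rw [snoc_len]; exact olt_add_one _)
        rwa [snoc_val_len] at this
    obtain ⟨y0, hy0Br, hy0Ag, hy0c⟩ := hyb false
    obtain ⟨y1, hy1Br, hy1Ag, hy1c⟩ := hyb true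
    have hagree01 : ∀ i < tS.len, y0 i = y1 i := fun i hi => (hy0Ag i hi).trans (hy1Ag i hi).symm
    have hPeq : Phi T y0 tS.len = Phi T y1 tS.len := phi_local T tS.len hagree01
    have hL₁κ : (Phi T y0 tS.len).len < κ.ord := phi_len_lt_ord hreg hT hc₁κ
    have haL₁ : a ≤ (Phi T y0 tS.len).len := hac₁.trans (phi_le_len hreg hT hc₁κ)
    have hxy0 : ∀ i < a, y0 i = x i := by
      intro i hi
      rw [hy0Ag i (lt_of_lt_of_le hi hac₁)]
      have := hxt.2 i (by rw [restrict_len]; exact hi)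
      rw [restrict_val_lt hi] at this
      exact this.symm
    refine ⟨restrictFn2 (phiB T y0) (Phi T y0 tS.len).len,
      ⟨y0, hy0Br, _, hL₁κ, rfl⟩, ⟨?_, ?_⟩, ?_⟩
    · rw [restrict_len, restrict_len]; exact haL₁
    · intro i hi
      rw [restrict_len] at hi
      rw [restrict_val_lt hi, restrict_val_lt (lt_of_lt_of_le hi haL₁)]
      exact phiB_local fun j hj => (hxy0 j (lt_of_le_of_lt (olt_add_one_iff.1 hj) hi)).symm
    · have hkey : ∀ (b : Bool) (yb : Ordinal → Bool), yb ∈ Branches2 κ S →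
          (∀ i < tS.len, yb i = tS.val i) → yb tS.len = b →
          PreSeq2.snoc (restrictFn2 (phiB T y0) (Phi T y0 tS.len).len) b ∈ sacksImage κ T S := by
        intro b yb hybBr hybAg hybc
        have hagr : ∀ i < tS.len, yb i = y0 i := fun i hi =>
          (hybAg i hi).trans (hy0Ag i hi).symm
        have hPb : Phi T yb tS.len = Phi T y0 tS.len := phi_local T tS.len hagr
        have hrw : PreSeq2.snoc (restrictFn2 (phiB T y0) (Phi T y0 tS.len).len) b
            = restrictFn2 (phiB T yb) ((Phi T y0 tS.len).len + 1) := by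
          refine snoc_eq_restrict (fun i hi => ?_) ?_
          · rw [restrict_len] at hi
            calc phiB T yb i = (Phi T yb tS.len).val i :=
                  phiB_coh hreg hT hc₁κ (by rw [hPb]; exact hi)
              _ = (Phi T y0 tS.len).val i := by rw [hPb]
              _ = phiB T y0 i := (phiB_coh hreg hT hc₁κ hi).symm
              _ = (restrictFn2 (phiB T y0) (Phi T y0 tS.len).len).val i :=
                  (restrict_val_lt hi).symm
          · show phiB T yb (restrictFn2 (phiB T y0) (Phi T y0 tS.len).len).len = b
            have h3 : (restrictFn2 (phiB T y0) (Phi T y0 tS.len).len).len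
                = (Phi T yb tS.len).len := by rw [restrict_len, hPb]
            rw [h3, phiB_bit hreg hT hc₁κ, hybc]
        rw [hrw]
        exact ⟨yb, hybBr, _, oadd_one_lt hκlim hL₁κ, rfl⟩
      exact ⟨hkey false y0 hy0Br hy0Ag hy0c, hkey true y1 hy1Br hy1Ag hy1c⟩
  · intro y l hlκ hllim hcof
    have hmemS' : ∀ a < l, restrictFn2 y a ∈ sacksImage κ T S := by
      intro a ha
      obtain ⟨b, hab, hbl, hsplb⟩ := hcof a ha
      obtain ⟨x, hx, b', hb', he⟩ := hsplb.1
      have hb'' : b + 1 = b' := by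
        have := congrArg PreSeq2.len he
        rwa [snoc_len, restrict_len, restrict_len] at this
      have hyx : ∀ i < b, y i = phiB T x i := by
        intro i hi
        have hval : (PreSeq2.snoc (restrictFn2 y b) false).val i
            = (restrictFn2 (phiB T x) b').val i := by rw [he]
        rw [snoc_val_lt (by rw [restrict_len]; exact hi), restrict_val_lt hi,
          restrict_val_lt (lt_of_lt_of_le hi (le_of_lt (hb'' ▸ olt_add_one b)))] at hval
        exact hval
      rw [restrict_eq_restrict fun i hi => hyx i (lt_of_lt_of_le hi hab)]
      exact ⟨x, hx, a, ha.trans hlκ, rfl⟩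
    have h' : ∀ a < l, ∃ x ∈ Branches2 κ S, ∀ i < a, y i = phiB T x i :=
      fun a ha => hfromS' (hmemS' a ha) le_rfl
    obtain ⟨p, hpBr, hmatch⟩ := lift_branch hreg hT hS hlκ.le hllim h'
    set R := {d : Ordinal | (Phi T p d).len < l ∧ Splitting S (restrictFn2 p d)} with hR
    have hRκ : ∀ d ∈ R, d < κ.ord := by
      intro d hd
      have h1 : (PreSeq2.snoc (restrictFn2 p d) false).len < κ.ord := (hS.2.1 _ hd.2.1).1
      rw [snoc_len, restrict_len] at h1
      exact lt_trans (olt_add_one d) h1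
    have hRlt : ∀ d ∈ R, d < l := fun d hd =>
      lt_of_le_of_lt (phi_le_len hreg hT (hRκ d hd)) hd.1
    have hR1 : ∀ a < l, ∃ d ∈ R, a ≤ (Phi T p d).len := by
      intro a ha
      obtain ⟨b, hab, hbl, hsplb⟩ := hcof a ha
      obtain ⟨w, hwBr, d, hdκ, hlen, hvals, hsplSw⟩ := spl_char hreg hT hS hsplb
      rw [restrict_len] at hlen
      have hvals' : ∀ i < b, phiB T w i = y i := by
        intro i hi
        have := hvals i (by rw [restrict_len]; exact hi)
        rwa [restrict_val_lt hi] at this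
      have hag : ∀ i < b, phiB T w i = phiB T p i := fun i hi =>
        (hvals' i hi).trans (hmatch i (hi.trans hbl))
      have hwp : ∀ j < d, w j = p j := fun j hj =>
        stage_agree hreg hT hag j (hj.trans hdκ) (hlen ▸ phi_len_lt hreg hT hj hdκ)
      have hPdw : Phi T p d = Phi T w d := phi_local T d fun j hj => (hwp j hj).symm
      have hrpd : restrictFn2 p d = restrictFn2 w d :=
        restrict_eq_restrict fun j hj => (hwp j hj).symm
      refine ⟨d, ⟨?_, ?_⟩, ?_⟩
      · rw [hPdw, hlen]; exact hbl
      · rw [hrpd]; exact hsplSw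
      · rw [hPdw, hlen]; exact hab
    have hRne : R.Nonempty := by
      obtain ⟨d, hd, _⟩ := hR1 0 hllim.pos
      exact ⟨d, hd⟩
    have hRbdd : BddAbove R := ⟨l, fun d hd => (hRlt d hd).le⟩
    have hRnomax : ∀ d ∈ R, ∃ d' ∈ R, d < d' := by
      intro d hd
      obtain ⟨d', hd', hled'⟩ := hR1 ((Phi T p d).len + 1) (oadd_one_lt hllim hd.1)
      refine ⟨d', hd', ?_⟩
      by_contra hcon
      have h2 : (Phi T p d').len ≤ (Phi T p d).len :=
        phi_len_le hreg hT (not_lt.1 hcon) (hRκ d hd)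
      exact absurd (lt_of_lt_of_le (lt_of_lt_of_le (olt_add_one _) hled') h2) (lt_irrefl _)
    have hdltc₂ : ∀ d ∈ R, d < sSup R := by
      intro d hd
      obtain ⟨d', hd', hdd'⟩ := hRnomax d hd
      exact lt_of_lt_of_le hdd' (le_csSup hRbdd hd')
    have hc₂l : sSup R ≤ l := csSup_le hRne fun d hd => (hRlt d hd).le
    have hc₂κ : sSup R < κ.ord := lt_of_le_of_lt hc₂l hlκ
    have hc₂lim : Order.IsSuccLimit (sSup R) := by
      rw [Ordinal.isSuccLimit_iff, Order.isSuccPrelimit_iff_succ_lt]; constructor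
      · obtain ⟨d, hd⟩ := hRne
        exact (lt_of_le_of_lt (zero_le) (hdltc₂ d hd)).ne'
      · intro a ha
        obtain ⟨d, hd, had⟩ := (lt_csSup_iff hRbdd hRne).1 ha
        rw [← Ordinal.add_one_eq_succ]
        exact lt_of_le_of_lt (oadd_one_le_iff.2 had) (hdltc₂ d hd)
    have hsplc₂ : Splitting S (restrictFn2 p (sSup R)) := by
      refine hS.2.2.2.2.2.2 p (sSup R) hc₂κ hc₂lim fun a ha => ?_
      obtain ⟨d, hd, had⟩ := (lt_csSup_iff hRbdd hRne).1 ha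
      exact ⟨d, had.le, hdltc₂ d hd, hd.2⟩
    have hlenc₂ : (Phi T p (sSup R)).len = l := by
      apply le_antisymm
      · by_contra hcon
        obtain ⟨c, hc, hlc⟩ := phi_limit hreg hT hc₂κ hc₂lim l (not_le.1 hcon)
        obtain ⟨d, hd, hcd⟩ := (lt_csSup_iff hRbdd hRne).1 hc
        have h2 : (Phi T p c).len < (Phi T p d).len := phi_len_lt hreg hT hcd (hRκ d hd)
        exact absurd (lt_trans hlc h2) (not_lt.2 hd.1.le)
      · by_contra hcon
        have hlt : (Phi T p (sSup R)).len < l := not_le.1 hcon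
        obtain ⟨d, hd, hled⟩ := hR1 ((Phi T p (sSup R)).len + 1) (oadd_one_lt hllim hlt)
        have h2 : (Phi T p d).len < (Phi T p (sSup R)).len :=
          phi_len_lt hreg hT (hdltc₂ d hd) hc₂κ
        exact absurd (lt_trans (lt_of_lt_of_le (olt_add_one _) hled) h2) (lt_irrefl _)
    have hkey : ∀ b : Bool, PreSeq2.snoc (restrictFn2 y l) b ∈ sacksImage κ T S := by
      intro b
      have hsb : PreSeq2.snoc (restrictFn2 p (sSup R)) b ∈ S := by
        cases b
        exacts [hsplc₂.1, hsplc₂.2]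
      obtain ⟨z, hzBr, hzAg⟩ := exists_branch hreg hS hsb
      have hzp : ∀ i < sSup R, z i = p i := by
        intro i hi
        have := hzAg i (by rw [snoc_len, restrict_len]; exact hi.trans (olt_add_one _))
        rwa [snoc_val_lt (by rw [restrict_len]; exact hi), restrict_val_lt hi] at this
      have hzc : z (sSup R) = b := by
        have h4 := hzAg (sSup R) (by rw [snoc_len, restrict_len]; exact olt_add_one _)
        have h5 : (PreSeq2.snoc (restrictFn2 p (sSup R)) b).val (sSup R) = b :=
          snoc_val_len (restrictFn2 p (sSup R)) b
        exact h4.trans h5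
      have hPz : Phi T z (sSup R) = Phi T p (sSup R) := phi_local T (sSup R) hzp
      have hrw : PreSeq2.snoc (restrictFn2 y l) b = restrictFn2 (phiB T z) (l + 1) := by
        refine snoc_eq_restrict (fun i hi => ?_) ?_
        · rw [restrict_len] at hi
          calc phiB T z i = (Phi T z (sSup R)).val i :=
                phiB_coh hreg hT hc₂κ (by rw [hPz, hlenc₂]; exact hi)
            _ = (Phi T p (sSup R)).val i := by rw [hPz]
            _ = phiB T p i := (phiB_coh hreg hT hc₂κ (by rw [hlenc₂]; exact hi)).symm
            _ = y i := (hmatch i hi).symm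
            _ = (restrictFn2 y l).val i := (restrict_val_lt hi).symm
        · show phiB T z (restrictFn2 y l).len = b
          have h3 : (restrictFn2 y l).len = (Phi T z (sSup R)).len := by
            rw [restrict_len, hPz, hlenc₂]
          rw [h3, phiB_bit hreg hT hc₂κ, hzc]
      rw [hrw]
      exact ⟨z, hzBr, l + 1, oadd_one_lt hκlim hlκ, rfl⟩
    exact ⟨hkey false, hkey true⟩

end SilverSacks
open SilverSacks in
/-- If all sets of a pointclass `Γ` closed under continuous preimages are
κ-Silver measurable, then they are all κ-Sacks measurable. -/
theorem silver_to_sacks_measurable (κ : Cardinal) (hreg : κ.IsRegular)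
    (hunc : Cardinal.aleph0 < κ) (hlt : Cardinal.powerlt κ κ = κ)
    (Γ : Set (Set (Ordinal → Bool)))
    (hΓ : ∀ f : (Ordinal → Bool) → (Ordinal → Bool),
      @Continuous _ _ (boundedTop2 κ) (boundedTop2 κ) f → ∀ A ∈ Γ, f ⁻¹' A ∈ Γ)
    (hSil : ∀ A ∈ Γ, SilverMeasurable κ A) :
    ∀ A ∈ Γ, SacksMeasurable κ A := by
  classical
  intro A hA T hT
  have hκlim : Order.IsSuccLimit κ.ord := Cardinal.isSuccLimit_ord hreg.aleph0_le
  have hB : phiB' κ T ⁻¹' A ∈ Γ := hΓ _ (phiB'_continuous κ T) A hA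
  obtain ⟨S, hSsil, hSC, hScase⟩ := hSil _ hB (fullC κ) (fullC_silver hreg)
  have hS : IsSacks κ S := hSsil.1
  refine ⟨sacksImage κ T S, sacksImage_isSacks hreg hT hS, ?_, ?_⟩
  · rintro u ⟨x, hx, a, ha, rfl⟩
    exact phiB_restrict_mem hreg hT ha
  · have hcorr : ∀ y ∈ Branches2 κ (sacksImage κ T S),
        ∃ p ∈ Branches2 κ S, phiB' κ T p = y := by
      intro y hy
      have h' : ∀ a < κ.ord, ∃ x ∈ Branches2 κ S, ∀ i < a, y i = phiB T x i := by
        intro a ha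
        obtain ⟨x, hx, b, hb, he⟩ := hy a ha
        have hba : a = b := by
          have := congrArg PreSeq2.len he
          rwa [restrict_len, restrict_len] at this
        refine ⟨x, hx, fun i hi => ?_⟩
        have hval : (restrictFn2 y a).val i = (restrictFn2 (phiB T x) b).val i := by rw [he]
        rwa [restrict_val_lt hi, restrict_val_lt (hba ▸ hi)] at hval
      obtain ⟨p, hpBr, hmatch⟩ := lift_branch hreg hT hS le_rfl hκlim h'
      refine ⟨fun i => if i < κ.ord then p i else y i, ?_, ?_⟩
      · intro a ha
        rw [show restrictFn2 (fun i => if i < κ.ord then p i else y i) a = restrictFn2 p a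
          from restrict_eq_restrict fun i hi => if_pos (hi.trans ha)]
        exact hpBr a ha
      · funext i
        show (if i < κ.ord then phiB T (fun j => if j < κ.ord then p j else y j) i
          else (if i < κ.ord then p i else y i)) = y i
        by_cases hiκ : i < κ.ord
        · rw [if_pos hiκ]
          have h2 : phiB T (fun j => if j < κ.ord then p j else y j) i = phiB T p i :=
            phiB_local fun j hj =>
              if_pos (lt_of_le_of_lt (olt_add_one_iff.1 hj) hiκ)
          rw [h2, ← hmatch i hiκ]
        · rw [if_neg hiκ, if_neg hiκ]
    rcases hScase with hpos | hneg
    · left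
      intro y hy
      obtain ⟨p, hp, rfl⟩ := hcorr y hy
      exact hpos hp
    · right
      rw [Set.eq_empty_iff_forall_notMem]
      rintro y ⟨hy1, hy2⟩
      obtain ⟨p, hp, rfl⟩ := hcorr y hy1
      have h3 : p ∈ Branches2 κ S ∩ (phiB' κ T ⁻¹' A) := ⟨hp, hy2⟩
      rw [hneg] at h3
      exact h3
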